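/- For a derivation D of P_n, the Jacobian matrix J(D) is nilpotent if and only if div(D^{[q]}) = 0 for all integers q ≥ 1. -/

import Mathlib

open MvPolynomial

/-- `Pn k n` is the polynomial algebra `k[x₁,…,xₙ]`. -/
abbrev Pn (k : Type*) [CommRing k] (n : ℕ) := MvPolynomial (Fin n) k

/-- `Der k n` is the space of `k`-linear derivations of `Pn k n`. -/
abbrev Der (k : Type*) [CommRing k] (n : ℕ) := Derivation k (Pn k n) (Pn k n)

variable {k : Type*} [Field k] [CharZero k] {n : ℕ}

/-- The left-symmetric product of derivations: `(D · E)(xᵢ) = D (E xᵢ)`. -/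
noncomputable def lsMul (D E : Der k n) : Der k n :=
  MvPolynomial.mkDerivation k (fun i => D (E (MvPolynomial.X i)))

/-- The Jacobian matrix of a derivation: `(J D)ᵢⱼ = ∂(D xᵢ)/∂xⱼ`. -/
noncomputable def jac (D : Der k n) : Matrix (Fin n) (Fin n) (Pn k n) :=
  Matrix.of fun i j => MvPolynomial.pderiv j (D (MvPolynomial.X i))

/-- The divergence of a derivation. -/
noncomputable def divg (D : Der k n) : Pn k n :=
  ∑ i, MvPolynomial.pderiv i (D (MvPolynomial.X i))

/-- Right powers: `rpow D 1 = D`, `rpow D (r+1) = (rpow D r) · D` (for `r ≥ 1`). -/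
noncomputable def rpow (D : Der k n) : ℕ → Der k n
  | 0 => D
  | 1 => D
  | (r+2) => lsMul (rpow D (r+1)) D

/-- Left powers: `lpow D 1 = D`, `lpow D (r+1) = D · (lpow D r)` (for `r ≥ 1`). -/
noncomputable def lpow (D : Der k n) : ℕ → Der k n
  | 0 => D
  | 1 => D
  | (r+2) => lsMul D (lpow D (r+1))

/-- Right multiplication operator `R_D : E ↦ E · D`, as a `k`-linear endomorphism. -/
noncomputable def rmulOp (D : Der k n) : Der k n →ₗ[k] Der k n where
  toFun E := lsMul E D
  map_add' E₁ E₂ := by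
    show (MvPolynomial.mkDerivationEquiv k) _ =
      (MvPolynomial.mkDerivationEquiv k) _ + (MvPolynomial.mkDerivationEquiv k) _
    rw [← map_add]
    exact congrArg _ (funext fun i => by simp)
  map_smul' c E := by
    show (MvPolynomial.mkDerivationEquiv k) _ = c • (MvPolynomial.mkDerivationEquiv k) _
    rw [← map_smul]
    exact congrArg _ (funext fun i => by simp)

/-- Left multiplication operator `L_D : E ↦ D · E`, as a `k`-linear endomorphism. -/
noncomputable def lmulOp (D : Der k n) : Der k n →ₗ[k] Der k n where
  toFun E := lsMul D E
  map_add' E₁ E₂ := by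
    show (MvPolynomial.mkDerivationEquiv k) _ =
      (MvPolynomial.mkDerivationEquiv k) _ + (MvPolynomial.mkDerivationEquiv k) _
    rw [← map_add]
    exact congrArg _ (funext fun i => by simp)
  map_smul' c E := by
    show (MvPolynomial.mkDerivationEquiv k) _ = c • (MvPolynomial.mkDerivationEquiv k) _
    rw [← map_smul]
    exact congrArg _ (funext fun i => by simp)

/-- `Zc F i a` is the coefficient of `t^i` in the image of `a` under `xⱼ ↦ xⱼ + t·fⱼ`. -/
noncomputable def Zc (F : Fin n → Pn k n) (i : ℕ) (a : Pn k n) : Pn k n :=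
  (MvPolynomial.aeval
    (fun j => Polynomial.C (MvPolynomial.X j) + Polynomial.C (F j) * Polynomial.X :
      Fin n → Polynomial (Pn k n)) a).coeff i

/-- `PsiOp F m a = Σ (−1)^{k−1} r_k Z_{r₁}(Z_{r₂}(⋯ Z_{r_k}(a)⋯))`, summed over
compositions `(r₁,…,r_k)` of `m`. -/
noncomputable def PsiOp (F : Fin n → Pn k n) (m : ℕ) (a : Pn k n) : Pn k n :=
  ∑ c : Composition m,
    (-1 : Pn k n) ^ (c.length - 1) * ((c.blocks.getLastD 0 : ℕ) : Pn k n) *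
      (c.blocks.foldr (fun r b => Zc F r b) a)

/- ======================= auxiliary lemmas ======================= -/

section JacNilpAux

open Matrix Polynomial LinearMap Module

lemma pderiv_comm' (i j : Fin n) (p : Pn k n) :
    pderiv i (pderiv j p) = pderiv j (pderiv i p) := by
  induction p using MvPolynomial.induction_on with
  | C a => simp
  | add p q hp hq => simp [hp, hq]
  | mul_X p s hp =>
      have hx : ∀ (a b : Fin n), pderiv a (pderiv b (X s : Pn k n)) = 0 := by
        intro a b
        rcases eq_or_ne s b with rfl | h
        · simp
        · rw [pderiv_X_of_ne h, map_zero]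
      simp only [pderiv_mul, map_add, hp, hx, mul_zero, add_zero]
      ring

lemma derivation_sum_apply' {ι : Type*} [DecidableEq ι] (s : Finset ι)
    (d : ι → Der k n) (p : Pn k n) : (∑ j ∈ s, d j) p = ∑ j ∈ s, d j p := by
  induction s using Finset.induction_on with
  | empty => simp
  | insert _ _ h ih => rw [Finset.sum_insert h, Finset.sum_insert h, Derivation.add_apply, ih]

/-- Any derivation is determined by its values on the variables. -/
lemma derivation_apply_eq_sum (E : Der k n) (p : Pn k n) :
    E p = ∑ j, E (X j) * pderiv j p := by
  have h : E = ∑ j, (E (X j)) • (pderiv j : Derivation k (Pn k n) (Pn k n)) := by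
    apply MvPolynomial.derivation_ext
    intro i
    rw [derivation_sum_apply']
    simp only [Derivation.smul_apply, smul_eq_mul]
    rw [Finset.sum_eq_single i (fun b _ hb => by rw [pderiv_X_of_ne (Ne.symm hb), mul_zero])
      (by simp)]
    simp
  conv_lhs => rw [h]
  rw [derivation_sum_apply']
  simp [Derivation.smul_apply, smul_eq_mul]

lemma map_pderiv_mul (b : Fin n) (A B : Matrix (Fin n) (Fin n) (Pn k n)) :
    (A * B).map (pderiv b) = A.map (pderiv b) * B + A * B.map (pderiv b) := by
  ext i j
  simp only [Matrix.map_apply, Matrix.mul_apply, Matrix.add_apply, map_sum, pderiv_mul]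
  rw [← Finset.sum_add_distrib]

lemma map_pderiv_pow (b : Fin n) (A : Matrix (Fin n) (Fin n) (Pn k n)) (q : ℕ) :
    (A ^ (q + 1)).map (pderiv b) =
      ∑ s ∈ Finset.range (q + 1), A ^ s * A.map (pderiv b) * A ^ (q - s) := by
  induction q with
  | zero => simp
  | succ q ih =>
      rw [pow_succ' A (q+1), map_pderiv_mul, ih, Finset.mul_sum,
        Finset.sum_range_succ' _ (q+1), add_comm]
      simp only [Nat.sub_zero, pow_zero, one_mul, Nat.succ_sub_succ_eq_sub]
      congr 1
      apply Finset.sum_congr rfl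
      intro s hs
      rw [← mul_assoc, ← mul_assoc, ← pow_succ' A s]

lemma trace_map_eq_pderiv_trace (b : Fin n) (A : Matrix (Fin n) (Fin n) (Pn k n)) :
    Matrix.trace (A.map (pderiv b)) = pderiv b (Matrix.trace A) := by
  simp [Matrix.trace, Matrix.diag, map_sum]

lemma pderiv_trace_pow (b : Fin n) (A : Matrix (Fin n) (Fin n) (Pn k n)) (q : ℕ) :
    pderiv b (Matrix.trace (A ^ (q + 1))) =
      (q + 1 : ℕ) * Matrix.trace (A ^ q * A.map (pderiv b)) := by
  rw [← trace_map_eq_pderiv_trace, map_pderiv_pow]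
  rw [Matrix.trace_sum]
  have h : ∀ s ∈ Finset.range (q + 1),
      Matrix.trace (A ^ s * A.map (pderiv b) * A ^ (q - s)) =
        Matrix.trace (A ^ q * A.map (pderiv b)) := by
    intro s hs
    rw [Matrix.trace_mul_comm, ← mul_assoc, ← pow_add]
    have : q - s + s = q := Nat.sub_add_cancel (Nat.lt_succ_iff.mp (Finset.mem_range.mp hs))
    rw [this, Matrix.trace_mul_comm, Matrix.trace_mul_comm (A.map (pderiv b)) (A ^ q)]
  rw [Finset.sum_congr rfl h, Finset.sum_const, Finset.card_range, nsmul_eq_mul]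

lemma sum_mulVec' {ι : Type*} (t : Finset ι) (B : ι → Matrix (Fin n) (Fin n) (Pn k n))
    (v : Fin n → Pn k n) : (∑ s ∈ t, B s) *ᵥ v = ∑ s ∈ t, (B s) *ᵥ v := by
  classical
  induction t using Finset.induction_on with
  | empty => simp [Matrix.zero_mulVec]
  | insert _ _ h ih => rw [Finset.sum_insert h, Finset.sum_insert h, Matrix.add_mulVec, ih]

lemma key_swap (f v : Fin n → Pn k n) (A : Matrix (Fin n) (Fin n) (Pn k n))
    (hA : ∀ i j, A i j = pderiv j (f i)) (m : ℕ) :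
    ∑ i, ((A ^ m * A.map (pderiv i)).mulVec v) i
      = ∑ b, v b * Matrix.trace (A ^ m * A.map (pderiv b)) := by
  have hsym : ∀ (i a b : Fin n), (A.map (pderiv i)) a b = (A.map (pderiv b)) a i := by
    intro i a b
    simp only [Matrix.map_apply, hA, pderiv_comm']
  have step : ∀ i b, (A ^ m * A.map (pderiv i)) i b = (A ^ m * A.map (pderiv b)) i i := by
    intro i b
    simp only [Matrix.mul_apply]
    exact Finset.sum_congr rfl fun a _ => by rw [hsym]
  calc ∑ i, ((A ^ m * A.map (pderiv i)).mulVec v) i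
      = ∑ i, ∑ b, (A ^ m * A.map (pderiv b)) i i * v b := by
        apply Finset.sum_congr rfl; intro i _
        simp only [Matrix.mulVec, dotProduct]
        exact Finset.sum_congr rfl fun b _ => by rw [step]
    _ = ∑ b, v b * Matrix.trace (A ^ m * A.map (pderiv b)) := by
        rw [Finset.sum_comm]
        apply Finset.sum_congr rfl; intro b _
        rw [Matrix.trace, Finset.mul_sum]
        simp only [Matrix.diag]
        exact Finset.sum_congr rfl fun i _ => mul_comm _ _

/-- The key identity: the divergence of `A^q *ᵥ f` equals `tr(A^(q+1))` plus correction
terms involving traces of `A^s · ∂_b A`. -/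
lemma main_identity (f : Fin n → Pn k n) (A : Matrix (Fin n) (Fin n) (Pn k n))
    (hA : ∀ i j, A i j = pderiv j (f i)) (q : ℕ) :
    ∑ i, pderiv i ((A ^ q).mulVec f i)
      = Matrix.trace (A ^ (q + 1)) +
        ∑ s ∈ Finset.range q, ∑ b, ((A ^ (q - 1 - s)).mulVec f b) *
          Matrix.trace (A ^ s * A.map (pderiv b)) := by
  have expand : ∀ i : Fin n, pderiv i ((A ^ q).mulVec f i)
      = (((A ^ q).map (pderiv i)).mulVec f) i + ∑ j, (A ^ q) i j * pderiv i (f j) := by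
    intro i
    simp only [Matrix.mulVec, dotProduct, map_sum, pderiv_mul, Matrix.map_apply]
    rw [← Finset.sum_add_distrib]
  rw [Finset.sum_congr rfl fun i _ => expand i, Finset.sum_add_distrib]
  have htr : ∑ i, ∑ j, (A ^ q) i j * pderiv i (f j) = Matrix.trace (A ^ (q + 1)) := by
    rw [pow_succ]
    simp only [Matrix.trace, Matrix.diag, Matrix.mul_apply]
    exact Finset.sum_congr rfl fun i _ => Finset.sum_congr rfl fun j _ => by rw [← hA]
  rw [htr, add_comm]
  congr 1
  cases q with
  | zero =>
      simp only [pow_zero, Finset.range_zero, Finset.sum_empty]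
      apply Finset.sum_eq_zero
      intro i _
      simp only [Matrix.mulVec, dotProduct, Matrix.map_apply]
      apply Finset.sum_eq_zero
      intro j _
      rcases eq_or_ne i j with rfl | h
      · simp [Matrix.one_apply_eq]
      · rw [Matrix.one_apply_ne h, map_zero, zero_mul]
  | succ r =>
      have : ∀ i : Fin n, (((A ^ (r+1)).map (pderiv i)).mulVec f) i
          = ∑ s ∈ Finset.range (r + 1), ((A ^ s * A.map (pderiv i)).mulVec
              ((A ^ (r - s)).mulVec f)) i := by
        intro i
        rw [map_pderiv_pow, sum_mulVec']
        rw [Finset.sum_apply]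
        apply Finset.sum_congr rfl
        intro s _
        rw [← Matrix.mulVec_mulVec]
      rw [Finset.sum_congr rfl fun i _ => this i, Finset.sum_comm]
      apply Finset.sum_congr rfl
      intro s hs
      rw [key_swap f _ A hA s]
      simp only [Nat.succ_sub_succ_eq_sub, Nat.add_sub_cancel]
      rfl

lemma rpow_apply_X (D : Der k n) (q : ℕ) (i : Fin n) :
    rpow D (q + 1) (X i) = ((jac D) ^ q).mulVec (fun j => D (X j)) i := by
  induction q generalizing i with
  | zero => simp [rpow, Matrix.one_mulVec]
  | succ q ih =>
      show lsMul (rpow D (q+1)) D (X i) = _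
      rw [lsMul, MvPolynomial.mkDerivation_X]
      rw [derivation_apply_eq_sum (rpow D (q+1)) (D (X i))]
      calc ∑ j, rpow D (q+1) (X j) * pderiv j (D (X i))
          = ∑ j, jac D i j * (((jac D) ^ q).mulVec (fun j => D (X j)) j) := by
            apply Finset.sum_congr rfl; intro j _
            rw [ih j, mul_comm]; rfl
        _ = ((jac D) ^ (q+1)).mulVec (fun j => D (X j)) i := by
            rw [pow_succ', ← Matrix.mulVec_mulVec]
            rfl

lemma divg_rpow (D : Der k n) (q : ℕ) :
    divg (rpow D (q + 1)) = ∑ i, pderiv i (((jac D) ^ q).mulVec (fun j => D (X j)) i) := by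
  rw [divg]
  exact Finset.sum_congr rfl fun i _ => by rw [rpow_apply_X]

/-! ### Spectral input: a matrix all of whose power traces vanish is nilpotent -/

lemma finset_zero_of_power_sums {F : Type*} [Field F] (s : Finset F) (c : F → F)
    (hc : ∀ μ ∈ s, c μ ≠ 0) (h : ∀ q : ℕ, 1 ≤ q → ∑ μ ∈ s, c μ * μ ^ q = 0) :
    ∀ μ ∈ s, μ = 0 := by
  classical
  intro μ0 hμ0
  by_contra hne
  set P : F[X] := Polynomial.X * ∏ ν ∈ s.erase μ0, (Polynomial.X - Polynomial.C ν) with hP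
  have hcoeff0 : P.coeff 0 = 0 := by
    rw [hP, Polynomial.mul_coeff_zero, Polynomial.coeff_X_zero, zero_mul]
  have hsum : ∑ μ ∈ s, c μ * P.eval μ = 0 := by
    have : ∀ μ ∈ s, c μ * P.eval μ
        = ∑ j ∈ Finset.range (P.natDegree + 1), P.coeff j * (c μ * μ ^ j) := by
      intro μ _
      rw [Polynomial.eval_eq_sum_range, Finset.mul_sum]
      exact Finset.sum_congr rfl fun j _ => by ring
    rw [Finset.sum_congr rfl this, Finset.sum_comm]
    apply Finset.sum_eq_zero
    intro j _
    rcases Nat.eq_zero_or_pos j with rfl | hj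
    · simp [hcoeff0]
    · rw [← Finset.mul_sum]
      rw [h j hj, mul_zero]
  have heval : ∑ μ ∈ s, c μ * P.eval μ = c μ0 * P.eval μ0 := by
    apply Finset.sum_eq_single μ0
    · intro μ hμ hne'
      have : P.eval μ = 0 := by
        rw [hP, Polynomial.eval_mul, Polynomial.eval_prod]
        apply mul_eq_zero_of_right
        apply Finset.prod_eq_zero (Finset.mem_erase.mpr ⟨hne', hμ⟩)
        simp
      rw [this, mul_zero]
    · intro habs; exact absurd hμ0 habs
  have hPμ0 : P.eval μ0 ≠ 0 := by
    rw [hP, Polynomial.eval_mul, Polynomial.eval_prod, Polynomial.eval_X]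
    apply mul_ne_zero hne
    apply Finset.prod_ne_zero_iff.mpr
    intro ν hν
    have : ν ≠ μ0 := (Finset.mem_erase.mp hν).1
    simp only [Polynomial.eval_sub, Polynomial.eval_X, Polynomial.eval_C, sub_ne_zero]
    exact this.symm
  rw [heval] at hsum
  exact (mul_ne_zero (hc μ0 hμ0) hPμ0) hsum

lemma end_isNilpotent_of_traces {F V : Type*} [Field F] [CharZero F] [IsAlgClosed F]
    [AddCommGroup V] [Module F V] [FiniteDimensional F V] (f : Module.End F V)
    (h : ∀ q : ℕ, 1 ≤ q → LinearMap.trace F V (f ^ q) = 0) : IsNilpotent f := by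
  classical
  set E : F → Submodule F V := f.maxGenEigenspace with hE
  have hT : ⨆ μ, E μ = ⊤ := Module.End.iSup_maxGenEigenspace_eq_top f
  have hind : iSupIndep E := f.independent_maxGenEigenspace
  have hds : DirectSum.IsInternal E :=
    DirectSum.isInternal_submodule_of_iSupIndep_of_iSup_eq_top hind hT
  have hfin : {μ | E μ ≠ ⊥}.Finite := WellFoundedGT.finite_ne_bot_of_iSupIndep hind
  have hmap : ∀ (q : ℕ) (μ : F), Set.MapsTo (f ^ q) (E μ) (E μ) := fun q μ =>
    f.mapsTo_maxGenEigenspace_of_comm ((Commute.refl f).pow_right q) μ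
  have key : ∀ (q : ℕ) (μ : F),
      LinearMap.trace F (E μ) ((f ^ q).restrict (hmap q μ)) =
        μ ^ q * (Module.finrank F (E μ) : F) := by
    intro q μ
    have hm : ∀ x ∈ E μ, f x ∈ E μ := f.mapsTo_maxGenEigenspace_of_comm rfl μ
    set g : Module.End F (E μ) := f.restrict hm with hg
    have hrg : (f ^ q).restrict (hmap q μ) = g ^ q := by
      rw [hg, Module.End.pow_restrict q hm]
    set a : Module.End F (E μ) := algebraMap F _ μ with ha
    have hnb : IsNilpotent (g - a) := by
      obtain ⟨m, hm'⟩ := f.isNilpotent_restrict_maxGenEigenspace_sub_algebraMap μ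
      refine ⟨m, ?_⟩
      have : g - a = (f - algebraMap F (Module.End F V) μ).restrict
          (f.mapsTo_maxGenEigenspace_of_comm (Algebra.mul_sub_algebraMap_commutes f μ) μ) := by
        ext x
        simp [hg, ha, LinearMap.restrict_apply, Module.algebraMap_end_apply, LinearMap.sub_apply]
        rfl
      rw [this]
      exact hm'
    have hcomm : Commute g a := Algebra.commute_algebraMap_right μ g
    have hnilsub : IsNilpotent (g ^ q - a ^ q) := by
      have hgs : (∑ i ∈ Finset.range q, g ^ i * a ^ (q - 1 - i)) * (g - a) = g ^ q - a ^ q :=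
        hcomm.geom_sum₂_mul q
      rw [← hgs]
      apply Commute.isNilpotent_mul_left _ hnb
      apply Commute.sum_left
      intro i _
      have h1 : Commute (g ^ i) (g - a) :=
        ((Commute.refl g).sub_right (Algebra.commute_algebraMap_right μ g)).pow_left i
      have h2 : Commute (a ^ (q - 1 - i)) (g - a) :=
        ((Algebra.commute_algebraMap_left μ (g - a)).pow_left _)
      exact h1.mul_left h2
    have htr0 : LinearMap.trace F (E μ) (g ^ q - a ^ q) = 0 :=
      (LinearMap.isNilpotent_trace_of_isNilpotent hnilsub).eq_zero
    have hsplit : LinearMap.trace F (E μ) (g ^ q)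
        = LinearMap.trace F (E μ) (a ^ q) + LinearMap.trace F (E μ) (g ^ q - a ^ q) := by
      rw [← map_add]; congr 1; abel
    rw [hrg, hsplit, htr0, add_zero, ha, ← map_pow, Module.algebraMap_end_eq_smul_id, _root_.map_smul,
      LinearMap.trace_id, smul_eq_mul]
  have hps : ∀ q : ℕ, 1 ≤ q →
      ∑ μ ∈ hfin.toFinset, (Module.finrank F (E μ) : F) * μ ^ q = 0 := by
    intro q hq
    have h1 := LinearMap.trace_eq_sum_trace_restrict' hds hfin (hmap q)
    rw [h q hq] at h1
    calc ∑ μ ∈ hfin.toFinset, (Module.finrank F (E μ) : F) * μ ^ q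
        = ∑ μ ∈ hfin.toFinset, LinearMap.trace F (E μ) ((f ^ q).restrict (hmap q μ)) := by
          apply Finset.sum_congr rfl
          intro μ _
          rw [key q μ, mul_comm]
      _ = 0 := h1.symm
  have hzero : ∀ μ ∈ hfin.toFinset, μ = 0 := by
    apply finset_zero_of_power_sums _ _ _ hps
    intro μ hμ
    have hne : E μ ≠ ⊥ := (Set.Finite.mem_toFinset hfin).mp hμ
    have : Nontrivial (E μ) := Submodule.nontrivial_iff_ne_bot.mpr hne
    have hpos : 0 < Module.finrank F (E μ) := Module.finrank_pos
    exact_mod_cast Nat.cast_ne_zero.mpr hpos.ne'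
  have hE0 : E 0 = ⊤ := by
    apply top_unique
    rw [← hT]
    apply iSup_le
    intro μ
    rcases eq_or_ne μ 0 with rfl | hμ
    · exact le_rfl
    · have : E μ = ⊥ := by
        by_contra hne
        exact hμ (hzero μ ((Set.Finite.mem_toFinset hfin).mpr hne))
      rw [this]
      exact bot_le
  refine ⟨f.maxGenEigenspaceIndex 0, ?_⟩
  ext x
  have hx : x ∈ E 0 := by rw [hE0]; trivial
  rw [hE, Module.End.maxGenEigenspace_eq, Module.End.mem_genEigenspace_nat] at hx
  simpa using hx

lemma matrix_isNilpotent_of_map {R S : Type*} [CommRing R] [CommRing S]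
    {ι : Type*} [Fintype ι] [DecidableEq ι] (φ : R →+* S) (hφ : Function.Injective φ)
    (A : Matrix ι ι R) (h : IsNilpotent (A.map φ)) : IsNilpotent A := by
  obtain ⟨m, hm⟩ := h
  refine ⟨m, ?_⟩
  have hp : (A ^ m).map φ = 0 := by
    rw [← RingHom.mapMatrix_apply, map_pow, RingHom.mapMatrix_apply, hm]
  ext i j
  have : φ ((A ^ m) i j) = 0 := congrFun (congrFun hp i) j
  simpa using hφ (by simpa using this)

lemma matrix_trace_map {R S : Type*} [CommRing R] [CommRing S]
    {ι : Type*} [Fintype ι] (φ : R →+* S) (A : Matrix ι ι R) :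
    Matrix.trace (A.map φ) = φ (Matrix.trace A) := by
  simp [Matrix.trace, Matrix.diag, Matrix.map_apply]

lemma matrix_isNilpotent_of_traces {F : Type*} [Field F] [CharZero F]
    {ι : Type*} [Fintype ι] [DecidableEq ι] (A : Matrix ι ι F)
    (h : ∀ q : ℕ, 1 ≤ q → Matrix.trace (A ^ q) = 0) : IsNilpotent A := by
  set F' := AlgebraicClosure F
  haveI : CharZero F' := charZero_of_injective_algebraMap (algebraMap F F').injective
  set φ := algebraMap F F'
  set A' : Matrix ι ι F' := A.map φ with hA'
  have hpow : ∀ q : ℕ, A' ^ q = (A ^ q).map φ := by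
    intro q
    rw [hA', ← RingHom.mapMatrix_apply, ← map_pow, RingHom.mapMatrix_apply]
  have htr : ∀ q : ℕ, 1 ≤ q → Matrix.trace (A' ^ q) = 0 := by
    intro q hq
    rw [hpow, matrix_trace_map, h q hq, map_zero]
  set f : Module.End F' (ι → F') := Matrix.toLinAlgEquiv' A' with hf
  have hnf : IsNilpotent f := by
    apply end_isNilpotent_of_traces
    intro q hq
    rw [hf, ← map_pow]
    have h1 : (Matrix.toLinAlgEquiv' (A' ^ q) : Module.End F' (ι → F')) =
        Matrix.toLin' (A' ^ q) := rfl
    rw [h1, LinearMap.trace_eq_matrix_trace F' (Pi.basisFun F' ι)]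
    have h2 : LinearMap.toMatrix (Pi.basisFun F' ι) (Pi.basisFun F' ι) (Matrix.toLin' (A' ^ q))
        = A' ^ q := by
      rw [LinearMap.toMatrix_eq_toMatrix', LinearMap.toMatrix'_toLin']
    rw [h2]
    exact htr q hq
  obtain ⟨m, hm⟩ := hnf
  have hA'm : A' ^ m = 0 := by
    have h3 : A' ^ m = Matrix.toLinAlgEquiv'.symm (f ^ m) := by
      rw [← map_pow, AlgEquiv.symm_apply_apply]
    rw [h3, hm, map_zero]
  exact matrix_isNilpotent_of_map φ (algebraMap F F').injective A ⟨m, hA'm⟩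

lemma matrix_isNilpotent_of_traces_domain {R : Type*} [CommRing R] [IsDomain R] [CharZero R]
    {ι : Type*} [Fintype ι] [DecidableEq ι] (A : Matrix ι ι R)
    (h : ∀ q : ℕ, 1 ≤ q → Matrix.trace (A ^ q) = 0) : IsNilpotent A := by
  set F := FractionRing R
  haveI : CharZero F := charZero_of_injective_algebraMap (IsFractionRing.injective R F)
  set φ := algebraMap R F
  apply matrix_isNilpotent_of_map φ (IsFractionRing.injective R F)
  apply matrix_isNilpotent_of_traces
  intro q hq
  have : (A.map φ) ^ q = (A ^ q).map φ := by
    rw [← RingHom.mapMatrix_apply, ← map_pow, RingHom.mapMatrix_apply]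
  rw [this, matrix_trace_map, h q hq, map_zero]

end JacNilpAux

/-- `J(D)` is nilpotent iff `div(D^{[q]}) = 0` for all `q ≥ 1`. -/
theorem jac_nilpotent_iff_divg_rpow_eq_zero (hn : 1 ≤ n) (D : Der k n) :
    IsNilpotent (jac D) ↔ ∀ q : ℕ, 1 ≤ q → divg (rpow D q) = 0 := by
  classical
  set A := jac D with hAdef
  set f : Fin n → Pn k n := fun j => D (MvPolynomial.X j) with hfdef
  have hA : ∀ i j, A i j = MvPolynomial.pderiv j (f i) := fun i j => rfl
  have hu : ∀ q : ℕ, divg (rpow D (q+1)) = Matrix.trace (A ^ (q+1)) +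
      ∑ s ∈ Finset.range q, ∑ b, ((A ^ (q-1-s)).mulVec f b) *
        Matrix.trace (A ^ s * A.map (MvPolynomial.pderiv b)) := by
    intro q
    rw [divg_rpow, main_identity f A hA q]
  have haux : ∀ (s : ℕ) (b : Fin n), Matrix.trace (A ^ (s+1)) = 0 →
      Matrix.trace (A ^ s * A.map (MvPolynomial.pderiv b)) = 0 := by
    intro s b h0
    have h1 := pderiv_trace_pow b A s
    rw [h0, map_zero] at h1
    have h2 : ((s+1 : ℕ) : Pn k n) ≠ 0 := Nat.cast_ne_zero.mpr (Nat.succ_ne_zero s)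
    rcases mul_eq_zero.mp h1.symm with h | h
    · exact absurd h h2
    · exact h
  constructor
  · intro hnil q hq
    obtain ⟨q', rfl⟩ : ∃ q', q = q' + 1 := ⟨q - 1, (Nat.succ_pred_eq_of_pos hq).symm⟩
    have htr : ∀ r : ℕ, Matrix.trace (A ^ (r+1)) = 0 := by
      intro r
      have hnr : IsNilpotent (A ^ (r+1)) := by
        obtain ⟨m, hm⟩ := hnil
        exact ⟨m, by rw [← pow_mul, mul_comm (r+1) m, pow_mul, hm, zero_pow (Nat.succ_ne_zero r)]⟩
      exact (Matrix.isNilpotent_trace_of_isNilpotent hnr).eq_zero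
    rw [hu q', htr q', zero_add]
    apply Finset.sum_eq_zero; intro s hs
    apply Finset.sum_eq_zero; intro b _
    rw [haux s b (htr s), mul_zero]
  · intro hz
    have htr : ∀ q : ℕ, Matrix.trace (A ^ (q+1)) = 0 := by
      intro q
      induction q using Nat.strong_induction_on with
      | _ q ih =>
        have h0 := hu q
        rw [hz (q+1) (Nat.le_add_left 1 q)] at h0
        have hsum : ∑ s ∈ Finset.range q, ∑ b, ((A ^ (q-1-s)).mulVec f b) *
            Matrix.trace (A ^ s * A.map (MvPolynomial.pderiv b)) = 0 := by
          apply Finset.sum_eq_zero; intro s hs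
          apply Finset.sum_eq_zero; intro b _
          rw [haux s b (ih s (Finset.mem_range.mp hs)), mul_zero]
        rw [hsum, add_zero] at h0
        exact h0.symm
    apply matrix_isNilpotent_of_traces_domain
    intro q hq
    obtain ⟨q', rfl⟩ : ∃ q', q = q' + 1 := ⟨q - 1, (Nat.succ_pred_eq_of_pos hq).symm⟩
    exact htr q'
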